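/- Let g be a derivator whose discontinuity set is a set of isolated points, x₀ ∈ ℝ. Then for all n, m ∈ ℕ and all x ∈ ℝ: m ∫_{x₀}^{x} g_n^C g_{m−1}^B dμ_{g^B} + n ∫_{x₀}^{x} g_{n−1}^C g_m^B dμ_{g^C} = g_m^B(x) · g_n^C(x). -/

import Mathlib

open MeasureTheory Set Finset

/-- The jump of `g` at `x`: `Δg(x) = g(x⁺) − g(x)`. -/
noncomputable def jumpOf (g : ℝ → ℝ) (x : ℝ) : ℝ := Function.rightLim g x - g x

/-- Oriented Lebesgue–Stieltjes integral: `∫_a^b f dμ = ∫_{[a,b)} f dμ` if `a ≤ b`,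
`= −∫_{[b,a)} f dμ` otherwise. -/
noncomputable def ointeg (μ : MeasureTheory.Measure ℝ) (f : ℝ → ℝ) (a b : ℝ) : ℝ :=
  if a ≤ b then ∫ s in Set.Ico a b, f s ∂μ else - ∫ s in Set.Ico b a, f s ∂μ

/-- The `g`-monomials centered at `c`, defined from the Lebesgue–Stieltjes measure `μ` of `g`:
`g_0 ≡ 1`, `g_{n+1}(x) = (n+1) ∫_c^x g_n dμ` (oriented). -/
noncomputable def gMon (μ : MeasureTheory.Measure ℝ) (c : ℝ) : ℕ → ℝ → ℝ
  | 0 => fun _ => 1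
  | n + 1 => fun x => ((n : ℝ) + 1) * ointeg μ (gMon μ c n) c x


/-- The accumulated jump function `g^B` of `g`: `g^B(x) = Σ_{t∈[0,x)} Δg(t)` for `x ≥ 0`
and `g^B(x) = −Σ_{t∈[x,0)} Δg(t)` for `x < 0`. -/
noncomputable def jumpPart (g : ℝ → ℝ) (x : ℝ) : ℝ :=
  if 0 ≤ x then ∑' t : (Set.Ico (0:ℝ) x), jumpOf g (t : ℝ)
  else - ∑' t : (Set.Ico x (0:ℝ)), jumpOf g (t : ℝ)


lemma gMon_meas_bd (μ : Measure ℝ) (hμ : ∀ a b : ℝ, μ (Ico a b) ≠ ⊤) (c : ℝ) (k : ℕ) :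
    Measurable (gMon μ c k) ∧ ∀ a b : ℝ, ∃ C, 0 ≤ C ∧ ∀ x ∈ Icc a b, |gMon μ c k x| ≤ C := by
  induction k with
  | zero =>
    refine ⟨measurable_const, fun a b => ⟨1, zero_le_one, fun x _ => by simp [gMon]⟩⟩
  | succ k ih =>
    obtain ⟨hmeas, hbd⟩ := ih
    set f := gMon μ c k with hf
    have hint : ∀ u v : ℝ, IntegrableOn f (Ico u v) μ := by
      intro u v
      obtain ⟨C, _, hC⟩ := hbd u v
      refine Measure.integrableOn_of_bounded (M := C) (hμ u v) hmeas.aestronglyMeasurable ?_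
      filter_upwards [ae_restrict_mem measurableSet_Ico] with y hy
      simpa [Real.norm_eq_abs] using hC y ⟨hy.1, hy.2.le⟩
    constructor
    · have hAp : Monotone (fun x => ∫ t in Ico c (max c x), max (f t) 0 ∂μ) := by
        intro x y hxy
        refine setIntegral_mono_set ((hint c (max c y)).pos_part) ?_ ?_
        · filter_upwards with t; positivity
        · exact (Ico_subset_Ico le_rfl (max_le_max le_rfl hxy)).eventuallyLE
      have hAm : Monotone (fun x => ∫ t in Ico c (max c x), max (-f t) 0 ∂μ) := by
        intro x y hxy
        refine setIntegral_mono_set ((hint c (max c y)).neg.pos_part) ?_ ?_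
        · filter_upwards with t; positivity
        · exact (Ico_subset_Ico le_rfl (max_le_max le_rfl hxy)).eventuallyLE
      have hBp : Antitone (fun x => ∫ t in Ico (min x c) c, max (f t) 0 ∂μ) := by
        intro x y hxy
        refine setIntegral_mono_set ((hint (min x c) c).pos_part) ?_ ?_
        · filter_upwards with t; positivity
        · exact (Ico_subset_Ico (min_le_min hxy le_rfl) le_rfl).eventuallyLE
      have hBm : Antitone (fun x => ∫ t in Ico (min x c) c, max (-f t) 0 ∂μ) := by
        intro x y hxy
        refine setIntegral_mono_set ((hint (min x c) c).neg.pos_part) ?_ ?_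
        · filter_upwards with t; positivity
        · exact (Ico_subset_Ico (min_le_min hxy le_rfl) le_rfl).eventuallyLE
      have hsplit : ∀ s : Set ℝ, IntegrableOn f s μ →
          ∫ t in s, f t ∂μ = (∫ t in s, max (f t) 0 ∂μ) - ∫ t in s, max (-f t) 0 ∂μ := by
        intro s hs
        have h1 : IntegrableOn (fun t => max (f t) 0) s μ := hs.pos_part
        have h2 : IntegrableOn (fun t => max (-f t) 0) s μ := hs.neg.pos_part
        calc ∫ t in s, f t ∂μ = ∫ t in s, (max (f t) 0 - max (-f t) 0) ∂μ := by
              congr 1; ext t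
              rcases le_total (f t) 0 with h | h
              · rw [max_eq_right h, max_eq_left (neg_nonneg.2 h)]; ring
              · rw [max_eq_left h, max_eq_right (neg_nonpos.2 h)]; ring
          _ = _ := integral_sub h1 h2
      have heq : gMon μ c (k+1) = fun x => ((k:ℝ)+1) *
          (if c ≤ x then
            (∫ t in Ico c (max c x), max (f t) 0 ∂μ) - ∫ t in Ico c (max c x), max (-f t) 0 ∂μ
          else
            -((∫ t in Ico (min x c) c, max (f t) 0 ∂μ) - ∫ t in Ico (min x c) c, max (-f t) 0 ∂μ)) := by
        ext x
        show ((k:ℝ)+1) * ointeg μ f c x = _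
        congr 1
        unfold ointeg
        rcases le_or_gt c x with h | h
        · rw [if_pos h, if_pos h, max_eq_right h, hsplit _ (hint c x)]
        · rw [if_neg h.not_ge, if_neg h.not_ge, min_eq_left h.le, hsplit _ (hint x c)]
      rw [heq]
      exact measurable_const.mul (Measurable.ite measurableSet_Ici
        ((hAp.measurable.sub hAm.measurable))
        (((hBp.measurable.sub hBm.measurable)).neg))
    · intro a b
      obtain ⟨C, hC0, hC⟩ := hbd (min a c) (max b c)
      refine ⟨((k:ℝ)+1) * (C * (μ (Ico (min a c) (max b c))).toReal),
        by positivity, fun x hx => ?_⟩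
      have key : |ointeg μ f c x| ≤ C * (μ (Ico (min a c) (max b c))).toReal := by
        have hsub : (if c ≤ x then Ico c x else Ico x c) ⊆ Ico (min a c) (max b c) := by
          split
          · exact Ico_subset_Ico (min_le_right a c) (le_trans hx.2 (le_max_left b c))
          · exact Ico_subset_Ico (le_trans (min_le_left a c) hx.1) (le_max_right b c)
        have habs : |ointeg μ f c x| = ‖∫ t in (if c ≤ x then Ico c x else Ico x c), f t ∂μ‖ := by
          unfold ointeg; split <;> simp [Real.norm_eq_abs, abs_neg]
        rw [habs]
        have hfin' : μ (if c ≤ x then Ico c x else Ico x c) < ⊤ := by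
          split <;> exact Ne.lt_top (hμ _ _)
        have := norm_setIntegral_le_of_norm_le_const (C := C) (f := f) hfin'
          (fun t ht => by
            have ht' := hsub ht
            simpa [Real.norm_eq_abs] using hC t ⟨ht'.1, ht'.2.le⟩)
        refine this.trans (mul_le_mul_of_nonneg_left ?_ hC0)
        exact ENNReal.toReal_mono (hμ _ _) (measure_mono hsub)
      calc |gMon μ c (k+1) x| = ((k:ℝ)+1) * |ointeg μ f c x| := by
            rw [show gMon μ c (k+1) x = ((k:ℝ)+1) * ointeg μ f c x from rfl, abs_mul]
            congr 1; rw [abs_of_nonneg]; positivity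
        _ ≤ ((k:ℝ)+1) * (C * (μ (Ico (min a c) (max b c))).toReal) := by
            apply mul_le_mul_of_nonneg_left key (by positivity)


variable {g : ℝ → ℝ}

lemma jumpOf_nonneg (hg : Monotone g) (y : ℝ) : 0 ≤ jumpOf g y :=
  sub_nonneg.2 (hg.le_rightLim le_rfl)

lemma tsum_Ico_eq (hg : Monotone g)
    (hfin : ∀ a b : ℝ, ({y : ℝ | 0 < jumpOf g y} ∩ Set.Ico a b).Finite) (a b : ℝ) :
    ∑' t : (Set.Ico a b), jumpOf g (t : ℝ) = ∑ y ∈ (hfin a b).toFinset, jumpOf g y := by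
  rw [_root_.tsum_subtype]
  rw [tsum_eq_sum (s := (hfin a b).toFinset)]
  · apply Finset.sum_congr rfl
    intro y hy
    rw [Set.Finite.mem_toFinset] at hy
    exact Set.indicator_of_mem hy.2 _
  · intro y hy
    rw [Set.Finite.mem_toFinset] at hy
    by_cases hmem : y ∈ Ico a b
    · rw [Set.indicator_of_mem hmem]
      rcases lt_or_eq_of_le (jumpOf_nonneg hg y) with h | h
      · exact absurd ⟨h, hmem⟩ hy
      · exact h.symm
    · exact Set.indicator_of_notMem hmem _

lemma sum_split (hg : Monotone g)
    (hfin : ∀ a b : ℝ, ({y : ℝ | 0 < jumpOf g y} ∩ Set.Ico a b).Finite)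
    {a c b : ℝ} (hac : a ≤ c) (hcb : c ≤ b) :
    ∑ y ∈ (hfin a b).toFinset, jumpOf g y =
      (∑ y ∈ (hfin a c).toFinset, jumpOf g y) + ∑ y ∈ (hfin c b).toFinset, jumpOf g y := by
  have hu : (hfin a b).toFinset = (hfin a c).toFinset ∪ (hfin c b).toFinset := by
    ext y
    simp only [Set.Finite.mem_toFinset, Finset.mem_union, Set.mem_inter_iff, Set.mem_setOf_eq,
      Set.mem_Ico]
    constructor
    · rintro ⟨h1, h2, h3⟩
      rcases lt_or_ge y c with h | h
      · exact Or.inl ⟨h1, h2, h⟩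
      · exact Or.inr ⟨h1, h, h3⟩
    · rintro (⟨h1, h2, h3⟩ | ⟨h1, h2, h3⟩)
      · exact ⟨h1, h2, h3.trans_le hcb⟩
      · exact ⟨h1, hac.trans h2, h3⟩
  rw [hu, Finset.sum_union]
  rw [Finset.disjoint_left]
  intro y h1 h2
  rw [Set.Finite.mem_toFinset] at h1 h2
  exact absurd (h2.2.1.trans_lt h1.2.2) (lt_irrefl c)
  -- note: h1 : y ∈ {0<jump} ∩ Ico a c so y < c; h2 : c ≤ y

lemma jumpPart_sub (hg : Monotone g)
    (hfin : ∀ a b : ℝ, ({y : ℝ | 0 < jumpOf g y} ∩ Set.Ico a b).Finite)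
    {a b : ℝ} (hab : a ≤ b) :
    jumpPart g b - jumpPart g a = ∑ y ∈ (hfin a b).toFinset, jumpOf g y := by
  unfold jumpPart
  rcases le_or_gt 0 a with h0a | h0a
  · rw [if_pos (h0a.trans hab), if_pos h0a, tsum_Ico_eq hg hfin, tsum_Ico_eq hg hfin,
      sum_split hg hfin h0a hab]
    ring
  · rcases le_or_gt 0 b with h0b | h0b
    · rw [if_pos h0b, if_neg h0a.not_ge, tsum_Ico_eq hg hfin, tsum_Ico_eq hg hfin,
        sum_split hg hfin h0a.le h0b]
      ring
    · rw [if_neg h0b.not_ge, if_neg h0a.not_ge, tsum_Ico_eq hg hfin, tsum_Ico_eq hg hfin,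
        sum_split hg hfin hab h0b.le]
      ring

lemma jumpPart_sub_ge (hg : Monotone g)
    (hfin : ∀ a b : ℝ, ({y : ℝ | 0 < jumpOf g y} ∩ Set.Ico a b).Finite)
    {t b : ℝ} (htb : t < b) :
    jumpOf g t ≤ jumpPart g b - jumpPart g t := by
  rw [jumpPart_sub hg hfin htb.le]
  rcases lt_or_eq_of_le (jumpOf_nonneg hg t) with h | h
  · refine Finset.single_le_sum (fun y _ => jumpOf_nonneg hg y) ?_
    rw [Set.Finite.mem_toFinset]
    exact ⟨h, le_rfl, htb⟩
  · rw [← h]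
    exact Finset.sum_nonneg fun y _ => jumpOf_nonneg hg y

lemma muC_atom (hg : Monotone g)
    (hfin : ∀ a b : ℝ, ({y : ℝ | 0 < jumpOf g y} ∩ Set.Ico a b).Finite)
    (μC : Measure ℝ)
    (hμC : ∀ a b : ℝ, a ≤ b →
      μC (Set.Ico a b) = ENNReal.ofReal ((g b - jumpPart g b) - (g a - jumpPart g a)))
    (t : ℝ) : μC {t} = 0 := by
  have key : ∀ ε > (0:ℝ), μC {t} ≤ ENNReal.ofReal ε := by
    intro ε hε
    have htend := hg.tendsto_rightLim t
    have hev : ∀ᶠ b in nhdsWithin t (Set.Ioi t), g b < Function.rightLim g t + ε := by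
      have : Set.Iio (Function.rightLim g t + ε) ∈ nhds (Function.rightLim g t) :=
        Iio_mem_nhds (by linarith)
      exact htend this
    obtain ⟨b, hb1, hb2⟩ := (hev.and self_mem_nhdsWithin).exists
    -- hb1 : g b < rightLim + ε, hb2 : b ∈ Ioi t
    have h1 : μC {t} ≤ μC (Set.Ico t b) := measure_mono (by
      intro y hy; rw [Set.mem_singleton_iff] at hy; subst hy; exact ⟨le_rfl, hb2⟩)
    rw [hμC t b (le_of_lt hb2)] at h1
    refine h1.trans (ENNReal.ofReal_le_ofReal ?_)
    have h2 := jumpPart_sub_ge hg hfin (show t < b from hb2)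
    have : jumpOf g t = Function.rightLim g t - g t := rfl
    linarith
  by_contra hne
  have hfin' : μC {t} < ⊤ := by
    have : μC {t} ≤ μC (Set.Ico t (t+1)) := measure_mono (by
      intro y hy; rw [Set.mem_singleton_iff] at hy; subst hy; constructor <;> simp)
    rw [hμC t (t+1) (by linarith)] at this
    exact this.trans_lt ENNReal.ofReal_lt_top
  have hpos : 0 < (μC {t}).toReal := ENNReal.toReal_pos hne hfin'.ne
  have := key ((μC {t}).toReal / 2) (by linarith)
  have h3 := ENNReal.toReal_mono ENNReal.ofReal_ne_top this
  rw [ENNReal.toReal_ofReal (by linarith)] at h3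
  linarith


lemma fubini_key (μ1 μ2 : Measure ℝ) (I : Set ℝ) (hI : MeasurableSet I)
    (h1 : μ1 I ≠ ⊤) (h2 : μ2 I ≠ ⊤) (hatom : ∀ t : ℝ, μ2 {t} = 0)
    (φ ψ : ℝ → ℝ) (hφ : Measurable φ) (hψ : Measurable ψ)
    (Cφ Cψ : ℝ) (hbφ : ∀ x ∈ I, |φ x| ≤ Cφ) (hbψ : ∀ x ∈ I, |ψ x| ≤ Cψ)
    (J : ℝ → Set ℝ) (hJm : ∀ s, MeasurableSet (J s))
    (hA1 : MeasurableSet {p : ℝ × ℝ | p.2 ∈ J p.1})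
    (hA2 : MeasurableSet {p : ℝ × ℝ | p.1 ∈ J p.2})
    (hJsub : ∀ s ∈ I, J s ⊆ I)
    (hJ : ∀ s ∈ I, ∀ t ∈ I, s ≠ t → (t ∈ J s ↔ s ∉ J t)) :
    (∫ s in I, φ s * ∫ t in J s, ψ t ∂μ2 ∂μ1) + (∫ t in I, ψ t * ∫ s in J t, φ s ∂μ1 ∂μ2)
      = (∫ s in I, φ s ∂μ1) * (∫ t in I, ψ t ∂μ2) := by
  haveI hβ : IsFiniteMeasure (μ1.restrict I) :=
    ⟨by rw [Measure.restrict_apply_univ]; exact h1.lt_top⟩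
  haveI hγ : IsFiniteMeasure (μ2.restrict I) :=
    ⟨by rw [Measure.restrict_apply_univ]; exact h2.lt_top⟩
  set f : ℝ × ℝ → ℝ := fun p => φ p.1 * ψ p.2 with hfdef
  have hfmeas : Measurable f := (hφ.comp measurable_fst).mul (hψ.comp measurable_snd)
  have haemem : ∀ᵐ p ∂((μ1.restrict I).prod (μ2.restrict I)), p ∈ I ×ˢ I := by
    rw [ae_iff]
    have hset : {p : ℝ × ℝ | ¬ p ∈ I ×ˢ I} = (I ×ˢ I)ᶜ := rfl
    rw [hset, Measure.prod_apply (hI.prod hI).compl]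
    have hz0 : ∀ᵐ s ∂(μ1.restrict I), (μ2.restrict I) (Prod.mk s ⁻¹' (I ×ˢ I)ᶜ) = 0 := by
      filter_upwards [ae_restrict_mem hI] with s hs
      have hpre : Prod.mk s ⁻¹' (I ×ˢ I)ᶜ = Iᶜ := by ext t; simp [hs]
      rw [hpre, Measure.restrict_apply hI.compl]
      simp
    rw [lintegral_congr_ae hz0, lintegral_zero]
  have hintf : Integrable f ((μ1.restrict I).prod (μ2.restrict I)) := by
    refine ⟨hfmeas.aestronglyMeasurable, ?_⟩
    apply HasFiniteIntegral.of_bounded (C := Cφ * Cψ)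
    filter_upwards [haemem] with p hp
    obtain ⟨hp1, hp2⟩ := hp
    have h1' := hbφ _ hp1
    have h2' := hbψ _ hp2
    calc ‖f p‖ = |φ p.1| * |ψ p.2| := by rw [Real.norm_eq_abs, abs_mul]
      _ ≤ Cφ * Cψ := mul_le_mul h1' h2' (abs_nonneg _) ((abs_nonneg _).trans h1')
  have hint1 : Integrable ({p : ℝ × ℝ | p.2 ∈ J p.1}.indicator f)
      ((μ1.restrict I).prod (μ2.restrict I)) := hintf.indicator hA1
  have hint2 : Integrable ({p : ℝ × ℝ | p.1 ∈ J p.2}.indicator f)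
      ((μ1.restrict I).prod (μ2.restrict I)) := hintf.indicator hA2
  have ht1 : (∫ s in I, φ s * ∫ t in J s, ψ t ∂μ2 ∂μ1)
      = ∫ p, {p : ℝ × ℝ | p.2 ∈ J p.1}.indicator f p
          ∂((μ1.restrict I).prod (μ2.restrict I)) := by
    rw [integral_prod _ hint1]
    apply integral_congr_ae
    filter_upwards [ae_restrict_mem hI] with s hs
    have hsec : (fun t => {p : ℝ × ℝ | p.2 ∈ J p.1}.indicator f (s, t))
        = (J s).indicator (fun t => φ s * ψ t) := by
      ext t; by_cases h : t ∈ J s <;> simp [Set.indicator, h, hfdef]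
    rw [hsec, integral_indicator (hJm s), Measure.restrict_restrict (hJm s),
      Set.inter_eq_left.2 (hJsub s hs), integral_const_mul]
  have ht2 : (∫ t in I, ψ t * ∫ s in J t, φ s ∂μ1 ∂μ2)
      = ∫ p, {p : ℝ × ℝ | p.1 ∈ J p.2}.indicator f p
          ∂((μ1.restrict I).prod (μ2.restrict I)) := by
    rw [integral_prod_symm _ hint2]
    apply integral_congr_ae
    filter_upwards [ae_restrict_mem hI] with t ht
    have hsec : (fun s => {p : ℝ × ℝ | p.1 ∈ J p.2}.indicator f (s, t))
        = (J t).indicator (fun s => φ s * ψ t) := by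
      ext s; by_cases h : s ∈ J t <;> simp [Set.indicator, h, hfdef]
    rw [hsec, integral_indicator (hJm t), Measure.restrict_restrict (hJm t),
      Set.inter_eq_left.2 (hJsub t ht), integral_mul_const, mul_comm]
  have hdiag : ((μ1.restrict I).prod (μ2.restrict I)) {p : ℝ × ℝ | p.1 = p.2} = 0 := by
    rw [Measure.prod_apply (measurableSet_eq_fun measurable_fst measurable_snd)]
    have hz : ∀ s : ℝ, (μ2.restrict I) (Prod.mk s ⁻¹' {p : ℝ × ℝ | p.1 = p.2}) = 0 := by
      intro s
      have hpre : Prod.mk s ⁻¹' {p : ℝ × ℝ | p.1 = p.2} = {s} := by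
        ext t; simp [eq_comm]
      rw [hpre, Measure.restrict_apply (measurableSet_singleton s)]
      exact le_antisymm ((measure_mono Set.inter_subset_left).trans (hatom s).le) zero_le
    rw [lintegral_congr hz, lintegral_zero]
  have hne : ∀ᵐ p ∂((μ1.restrict I).prod (μ2.restrict I)), p.1 ≠ p.2 := by
    rw [ae_iff]
    convert hdiag using 2
    simp
  have hae : ({p : ℝ × ℝ | p.2 ∈ J p.1}.indicator f + {p : ℝ × ℝ | p.1 ∈ J p.2}.indicator f)
      =ᵐ[(μ1.restrict I).prod (μ2.restrict I)] f := by
    filter_upwards [haemem, hne] with p hp hpne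
    obtain ⟨hp1, hp2⟩ := hp
    show _ + _ = f p
    by_cases h : p.2 ∈ J p.1
    · have h' : p.1 ∉ J p.2 := by
        intro hc
        exact ((hJ p.2 hp2 p.1 hp1 (Ne.symm hpne)).1 hc) h
      simp [Set.indicator, h, h']
    · have h' : p.1 ∈ J p.2 := (hJ p.2 hp2 p.1 hp1 (Ne.symm hpne)).2 h
      simp [Set.indicator, h, h']
  calc (∫ s in I, φ s * ∫ t in J s, ψ t ∂μ2 ∂μ1) + (∫ t in I, ψ t * ∫ s in J t, φ s ∂μ1 ∂μ2)
      = ∫ p, ({p : ℝ × ℝ | p.2 ∈ J p.1}.indicator f p + {p : ℝ × ℝ | p.1 ∈ J p.2}.indicator f p)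
          ∂((μ1.restrict I).prod (μ2.restrict I)) := by
        rw [ht1, ht2, ← integral_add hint1 hint2]
    _ = ∫ p, f p ∂((μ1.restrict I).prod (μ2.restrict I)) := integral_congr_ae hae
    _ = (∫ s in I, φ s ∂μ1) * (∫ t in I, ψ t ∂μ2) := integral_prod_mul φ ψ


/-- Integration-by-parts identity between monomials of the continuous part `g^C = g − g^B`
and of the jump part `g^B`, for a derivator whose discontinuity set is a set of isolated
points: `m ∫_{x₀}^{x} g_n^C g_{m−1}^B dμ_{g^B} + n ∫_{x₀}^{x} g_{n−1}^C g_m^B dμ_{g^C}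
= g_m^B(x) · g_n^C(x)`. -/
theorem stmt11 (g : ℝ → ℝ)
    (hg : Monotone g) (hlc : ∀ x : ℝ, ContinuousWithinAt g (Set.Iio x) x)
    (hiso : ∀ y : ℝ, 0 < jumpOf g y →
      ∃ ε > (0 : ℝ), ∀ z ∈ Set.Ioo (y - ε) (y + ε), 0 < jumpOf g z → z = y)
    (hfin : ∀ a b : ℝ, ({y : ℝ | 0 < jumpOf g y} ∩ Set.Ico a b).Finite)
    (μB μC : MeasureTheory.Measure ℝ)
    (hμB : ∀ a b : ℝ, a ≤ b →
      μB (Set.Ico a b) = ENNReal.ofReal (jumpPart g b - jumpPart g a))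
    (hμC : ∀ a b : ℝ, a ≤ b →
      μC (Set.Ico a b) = ENNReal.ofReal ((g b - jumpPart g b) - (g a - jumpPart g a)))
    (x₀ : ℝ) :
    ∀ n m : ℕ, 1 ≤ n → 1 ≤ m → ∀ x : ℝ,
      (m : ℝ) * ointeg μB (fun s => gMon μC x₀ n s * gMon μB x₀ (m - 1) s) x₀ x +
      (n : ℝ) * ointeg μC (fun s => gMon μC x₀ (n - 1) s * gMon μB x₀ m s) x₀ x =
      gMon μB x₀ m x * gMon μC x₀ n x := by
  intro n m hn hm x
  obtain ⟨N, rfl⟩ : ∃ N, n = N + 1 := ⟨n - 1, (Nat.succ_pred_eq_of_pos hn).symm⟩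
  obtain ⟨M, rfl⟩ : ∃ M, m = M + 1 := ⟨m - 1, (Nat.succ_pred_eq_of_pos hm).symm⟩
  simp only [Nat.add_sub_cancel, Nat.cast_add, Nat.cast_one]
  have hfinB : ∀ a b : ℝ, μB (Ico a b) ≠ ⊤ := by
    intro a b
    rcases le_or_gt a b with h | h
    · rw [hμB a b h]; exact ENNReal.ofReal_ne_top
    · rw [Set.Ico_eq_empty h.asymm, measure_empty]; exact ENNReal.zero_ne_top
  have hfinC : ∀ a b : ℝ, μC (Ico a b) ≠ ⊤ := by
    intro a b
    rcases le_or_gt a b with h | h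
    · rw [hμC a b h]; exact ENNReal.ofReal_ne_top
    · rw [Set.Ico_eq_empty h.asymm, measure_empty]; exact ENNReal.zero_ne_top
  obtain ⟨hφm, hφbd⟩ := gMon_meas_bd μB hfinB x₀ M
  obtain ⟨hψm, hψbd⟩ := gMon_meas_bd μC hfinC x₀ N
  have hatom : ∀ t : ℝ, μC {t} = 0 := muC_atom hg hfin μC hμC
  set φ : ℝ → ℝ := gMon μB x₀ M with hφdef
  set ψ : ℝ → ℝ := gMon μC x₀ N with hψdef
  rcases le_or_gt x₀ x with hle | hlt
  · -- case x₀ ≤ x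
    set I : Set ℝ := Ico x₀ x with hIdef
    obtain ⟨Cφ, _, hCφ⟩ := hφbd x₀ x
    obtain ⟨Cψ, _, hCψ⟩ := hψbd x₀ x
    have hA1 : MeasurableSet {p : ℝ × ℝ | p.2 ∈ Ico x₀ p.1} := by
      have : {p : ℝ × ℝ | p.2 ∈ Ico x₀ p.1}
          = {p : ℝ × ℝ | x₀ ≤ p.2} ∩ {p : ℝ × ℝ | p.2 < p.1} := by
        ext p; simp [Set.mem_Ico]
      rw [this]
      exact (measurable_snd measurableSet_Ici).inter
        (measurableSet_lt measurable_snd measurable_fst)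
    have hA2 : MeasurableSet {p : ℝ × ℝ | p.1 ∈ Ico x₀ p.2} := by
      have : {p : ℝ × ℝ | p.1 ∈ Ico x₀ p.2}
          = {p : ℝ × ℝ | x₀ ≤ p.1} ∩ {p : ℝ × ℝ | p.1 < p.2} := by
        ext p; simp [Set.mem_Ico]
      rw [this]
      exact (measurable_fst measurableSet_Ici).inter
        (measurableSet_lt measurable_fst measurable_snd)
    have key := fubini_key μB μC I measurableSet_Ico (hfinB x₀ x) (hfinC x₀ x) hatom
      φ ψ hφm hψm Cφ Cψ
      (fun y hy => hCφ y ⟨hy.1, hy.2.le⟩) (fun y hy => hCψ y ⟨hy.1, hy.2.le⟩)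
      (fun s => Ico x₀ s) (fun s => measurableSet_Ico) hA1 hA2
      (fun s hs => Set.Ico_subset_Ico le_rfl hs.2.le)
      (by
        intro s hs t ht hst
        constructor
        · rintro ⟨_, h2⟩ ⟨_, h4⟩; exact absurd (h2.trans h4) (lt_irrefl _)
        · intro h
          refine ⟨ht.1, ?_⟩
          rcases lt_trichotomy t s with h' | h' | h'
          · exact h'
          · exact absurd h'.symm hst
          · exact absurd ⟨hs.1, h'⟩ h)
    have e1 : ointeg μB (fun s => gMon μC x₀ (N+1) s * φ s) x₀ x
        = ((N:ℝ)+1) * ∫ s in I, φ s * ∫ t in Ico x₀ s, ψ t ∂μC ∂μB := by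
      rw [ointeg, if_pos hle, ← integral_const_mul]
      apply setIntegral_congr_fun measurableSet_Ico
      intro s hs
      have hg1 : gMon μC x₀ (N+1) s = ((N:ℝ)+1) * ∫ t in Set.Ico x₀ s, ψ t ∂μC := by
        show ((N:ℝ)+1) * ointeg μC ψ x₀ s = _
        rw [ointeg, if_pos hs.1]
      show gMon μC x₀ (N+1) s * φ s = ((N:ℝ)+1) * (φ s * ∫ t in Set.Ico x₀ s, ψ t ∂μC)
      rw [hg1]; ring
    have e2 : ointeg μC (fun t => ψ t * gMon μB x₀ (M+1) t) x₀ x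
        = ((M:ℝ)+1) * ∫ t in I, ψ t * ∫ s in Ico x₀ t, φ s ∂μB ∂μC := by
      rw [ointeg, if_pos hle, ← integral_const_mul]
      apply setIntegral_congr_fun measurableSet_Ico
      intro t ht
      have hg1 : gMon μB x₀ (M+1) t = ((M:ℝ)+1) * ∫ s in Set.Ico x₀ t, φ s ∂μB := by
        show ((M:ℝ)+1) * ointeg μB φ x₀ t = _
        rw [ointeg, if_pos ht.1]
      show ψ t * gMon μB x₀ (M+1) t = ((M:ℝ)+1) * (ψ t * ∫ s in Set.Ico x₀ t, φ s ∂μB)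
      rw [hg1]; ring
    have e3 : gMon μB x₀ (M+1) x = ((M:ℝ)+1) * ∫ s in I, φ s ∂μB := by
      show ((M:ℝ)+1) * ointeg μB φ x₀ x = _
      rw [ointeg, if_pos hle]
    have e4 : gMon μC x₀ (N+1) x = ((N:ℝ)+1) * ∫ t in I, ψ t ∂μC := by
      show ((N:ℝ)+1) * ointeg μC ψ x₀ x = _
      rw [ointeg, if_pos hle]
    rw [e1, e2, e3, e4]
    linear_combination ((M:ℝ)+1) * ((N:ℝ)+1) * key
  · -- case x < x₀
    set I : Set ℝ := Ico x x₀ with hIdef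
    obtain ⟨Cφ, _, hCφ⟩ := hφbd x x₀
    obtain ⟨Cψ, _, hCψ⟩ := hψbd x x₀
    have hA1 : MeasurableSet {p : ℝ × ℝ | p.2 ∈ Ico p.1 x₀} := by
      have : {p : ℝ × ℝ | p.2 ∈ Ico p.1 x₀}
          = {p : ℝ × ℝ | p.1 ≤ p.2} ∩ {p : ℝ × ℝ | p.2 < x₀} := by
        ext p; simp [Set.mem_Ico]
      rw [this]
      exact (measurableSet_le measurable_fst measurable_snd).inter
        (measurable_snd measurableSet_Iio)
    have hA2 : MeasurableSet {p : ℝ × ℝ | p.1 ∈ Ico p.2 x₀} := by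
      have : {p : ℝ × ℝ | p.1 ∈ Ico p.2 x₀}
          = {p : ℝ × ℝ | p.2 ≤ p.1} ∩ {p : ℝ × ℝ | p.1 < x₀} := by
        ext p; simp [Set.mem_Ico]
      rw [this]
      exact (measurableSet_le measurable_snd measurable_fst).inter
        (measurable_fst measurableSet_Iio)
    have key := fubini_key μB μC I measurableSet_Ico (hfinB x x₀) (hfinC x x₀) hatom
      φ ψ hφm hψm Cφ Cψ
      (fun y hy => hCφ y ⟨hy.1, hy.2.le⟩) (fun y hy => hCψ y ⟨hy.1, hy.2.le⟩)
      (fun s => Ico s x₀) (fun s => measurableSet_Ico) hA1 hA2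
      (fun s hs => Set.Ico_subset_Ico hs.1 le_rfl)
      (by
        intro s hs t ht hst
        constructor
        · rintro ⟨h1, _⟩ ⟨h3, _⟩; exact hst (le_antisymm h1 h3)
        · intro h
          refine ⟨?_, ht.2⟩
          rcases le_or_gt s t with h' | h'
          · exact h'
          · exact absurd ⟨h'.le, hs.2⟩ h)
    have e1 : ointeg μB (fun s => gMon μC x₀ (N+1) s * φ s) x₀ x
        = ((N:ℝ)+1) * ∫ s in I, φ s * ∫ t in Ico s x₀, ψ t ∂μC ∂μB := by
      rw [ointeg, if_neg hlt.not_ge, ← integral_const_mul, ← integral_neg]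
      apply setIntegral_congr_fun measurableSet_Ico
      intro s hs
      have hg1 : gMon μC x₀ (N+1) s = ((N:ℝ)+1) * -∫ t in Set.Ico s x₀, ψ t ∂μC := by
        show ((N:ℝ)+1) * ointeg μC ψ x₀ s = _
        rw [ointeg, if_neg hs.2.not_ge]
      show -(gMon μC x₀ (N+1) s * φ s) = _
      rw [hg1]; ring
    have e2 : ointeg μC (fun t => ψ t * gMon μB x₀ (M+1) t) x₀ x
        = ((M:ℝ)+1) * ∫ t in I, ψ t * ∫ s in Ico t x₀, φ s ∂μB ∂μC := by
      rw [ointeg, if_neg hlt.not_ge, ← integral_const_mul, ← integral_neg]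
      apply setIntegral_congr_fun measurableSet_Ico
      intro t ht
      have hg1 : gMon μB x₀ (M+1) t = ((M:ℝ)+1) * -∫ s in Set.Ico t x₀, φ s ∂μB := by
        show ((M:ℝ)+1) * ointeg μB φ x₀ t = _
        rw [ointeg, if_neg ht.2.not_ge]
      show -(ψ t * gMon μB x₀ (M+1) t) = _
      rw [hg1]; ring
    have e3 : gMon μB x₀ (M+1) x = ((M:ℝ)+1) * -∫ s in I, φ s ∂μB := by
      show ((M:ℝ)+1) * ointeg μB φ x₀ x = _
      rw [ointeg, if_neg hlt.not_ge]
    have e4 : gMon μC x₀ (N+1) x = ((N:ℝ)+1) * -∫ t in I, ψ t ∂μC := by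
      show ((N:ℝ)+1) * ointeg μC ψ x₀ x = _
      rw [ointeg, if_neg hlt.not_ge]
    rw [e1, e2, e3, e4]
    linear_combination ((M:ℝ)+1) * ((N:ℝ)+1) * key
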